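/- For each S ∈ r([k]) (nonempty subset of [k]), let X_S ⊆ [0,1]^{r([k])} be a set in the σ-algebra A_S generated by the coordinates indexed by nonempty subsets of S, which is independent from the σ-algebra A_S^* generated by all A_T with T ⊊ S. Then {X_S}_{S ∈ r([k])} is a totally independent system: for any collection S_1, …, S_r of distinct nonempty subsets of [k], Vol(⋂_{i=1}^r X_{S_i}) = ∏_{i=1}^r Vol(X_{S_i}). -/
import Mathlib


open MeasureTheory Set

/-- The index set `r([k])` of nonempty subsets of `[k]`. -/
def NESub (k : ℕ) := {S : Finset (Fin k) // S.Nonempty}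

instance (k : ℕ) : Fintype (NESub k) := by unfold NESub; infer_instance

/-- The product Lebesgue probability measure on `[0,1]^{r([k])}`, realized on
`r([k]) → ℝ` as the product of copies of Lebesgue measure restricted to `[0,1]`. -/
noncomputable def cubeMeasure (k : ℕ) : Measure (NESub k → ℝ) :=
  Measure.pi fun _ => (volume : Measure ℝ).restrict (Icc (0:ℝ) 1)

/-- `𝓐 S`: the σ-algebra on `[0,1]^{r([k])}` generated by the coordinates indexed by the
nonempty subsets of `S`. -/
def coordAlg (k : ℕ) (S : Finset (Fin k)) : MeasurableSpace (NESub k → ℝ) :=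
  ⨆ (T : NESub k) (_ : T.1 ⊆ S), MeasurableSpace.comap (fun x => x T) inferInstance

/-- `𝓐* S`: the σ-algebra generated by all `𝓐 T` with `T ⊊ S`, equivalently by the
coordinates indexed by nonempty proper subsets of `S`. -/
def coordAlgStar (k : ℕ) (S : Finset (Fin k)) : MeasurableSpace (NESub k → ℝ) :=
  ⨆ (T : NESub k) (_ : T.1 ⊂ S), MeasurableSpace.comap (fun x => x T) inferInstance

open ProbabilityTheory

instance : IsProbabilityMeasure ((volume : Measure ℝ).restrict (Icc (0:ℝ) 1)) :=
  ⟨by simp [Real.volume_Icc]⟩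

instance (k : ℕ) : IsProbabilityMeasure (cubeMeasure k) := by
  unfold cubeMeasure; infer_instance

lemma cube_eval_preimage (k : ℕ) (i : NESub k) {A : Set ℝ} (hA : MeasurableSet A) :
    cubeMeasure k ((fun x : NESub k → ℝ => x i) ⁻¹' A)
      = (volume : Measure ℝ).restrict (Icc (0:ℝ) 1) A := by
  classical
  have h : ((fun x : NESub k → ℝ => x i) ⁻¹' A)
      = Set.pi univ (Function.update (fun _ : NESub k => (univ : Set ℝ)) i A) := by
    ext x
    simp only [mem_preimage, mem_univ_pi, Function.update_apply]
    constructor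
    · intro hx j
      split_ifs with hj
      · rw [hj]; exact hx
      · trivial
    · intro hx
      have := hx i
      simpa using this
  rw [h, cubeMeasure, Measure.pi_pi]
  have : ∀ j : NESub k, (volume : Measure ℝ).restrict (Icc (0:ℝ) 1)
      (Function.update (fun _ : NESub k => (univ : Set ℝ)) i A j)
      = if j = i then (volume : Measure ℝ).restrict (Icc (0:ℝ) 1) A else 1 := by
    intro j
    rw [Function.update_apply]
    split_ifs with hj
    · rfl
    · exact measure_univ
  rw [Finset.prod_congr rfl fun j _ => this j]
  simp

lemma iIndep_coord (k : ℕ) :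
    iIndep (fun T : NESub k => MeasurableSpace.comap (fun x : NESub k → ℝ => x T) inferInstance)
      (cubeMeasure k) := by
  classical
  rw [iIndep_iff]
  intro s f hf
  choose g hgm hgf using fun i hi => MeasurableSpace.measurableSet_comap.mp (hf i hi)
  set G : NESub k → Set ℝ := fun i => if hi : i ∈ s then g i hi else univ with hG
  have hinter : (⋂ i ∈ s, f i) = Set.pi univ G := by
    ext x
    simp only [mem_iInter, mem_univ_pi, hG]
    constructor
    · intro hx i
      by_cases hi : i ∈ s
      · simp only [dif_pos hi]
        have := hx i hi
        rw [← hgf i hi] at this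
        exact this
      · simp [dif_neg hi]
    · intro hx i hi
      have := hx i
      rw [dif_pos hi] at this
      rw [← hgf i hi]
      exact this
  rw [hinter, cubeMeasure, Measure.pi_pi]
  have h1 : ∏ i, (volume : Measure ℝ).restrict (Icc (0:ℝ) 1) (G i)
      = ∏ i ∈ s, (volume : Measure ℝ).restrict (Icc (0:ℝ) 1) (G i) := by
    refine (Finset.prod_subset (Finset.subset_univ s) fun i _ hi => ?_).symm
    simp [hG, dif_neg hi]
  rw [h1]
  refine Finset.prod_congr rfl fun i hi => ?_
  rw [← hgf i hi,
    show (Measure.pi fun _ : NESub k => (volume : Measure ℝ).restrict (Icc (0:ℝ) 1)) = cubeMeasure k from rfl,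
    cube_eval_preimage k i (hgm i hi)]
  simp [hG, dif_pos hi]

section Core

variable (k : ℕ)

local notation "m" => fun T : NESub k =>
  MeasurableSpace.comap (fun x : NESub k → ℝ => x T) inferInstance

lemma h_le_top (T : NESub k) :
    MeasurableSpace.comap (fun x : NESub k → ℝ => x T) inferInstance
      ≤ (inferInstance : MeasurableSpace (NESub k → ℝ)) :=
  (measurable_pi_apply T).comap_le

lemma coordAlg_le (S : Finset (Fin k)) :
    coordAlg k S ≤ (inferInstance : MeasurableSpace (NESub k → ℝ)) :=
  iSup_le fun T => iSup_le fun _ => h_le_top k T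

lemma indep_of_ne (S : NESub k) (X : Set (NESub k → ℝ))
    (hmeas : MeasurableSet[coordAlg k S.1] X)
    (hind : ∀ B : Set (NESub k → ℝ), MeasurableSet[coordAlgStar k S.1] B →
      cubeMeasure k (X ∩ B) = cubeMeasure k X * cubeMeasure k B) :
    ∀ B : Set (NESub k → ℝ),
      MeasurableSet[⨆ T ∈ {T : NESub k | T ≠ S}, m T] B →
      cubeMeasure k (X ∩ B) = cubeMeasure k X * cubeMeasure k B := by
  classical
  have hXmeas : MeasurableSet X := coordAlg_le k S.1 _ hmeas
  set MS : MeasurableSpace (NESub k → ℝ) := ⨆ T ∈ {T : NESub k | T.1 ⊆ S.1}, m T with hMS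
  set MS' : MeasurableSpace (NESub k → ℝ) := ⨆ T ∈ {T : NESub k | ¬ T.1 ⊆ S.1}, m T with hMS'
  have hXS : MeasurableSet[MS] X := hmeas
  have hIndep : Indep MS MS' (cubeMeasure k) := by
    refine indep_iSup_of_disjoint (fun T => h_le_top k T) (iIndep_coord k) ?_
    exact Set.disjoint_left.mpr fun T h1 h2 => h2 h1
  have hIndepIff := (Indep_iff _ _ _).mp hIndep
  have key : Indep (MeasurableSpace.generateFrom {X}) (⨆ T ∈ {T : NESub k | T ≠ S}, m T)
      (cubeMeasure k) := by
    refine IndepSets.indep ?_ ?_ (IsPiSystem.singleton X) ?_ rfl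
      (generateFrom_piiUnionInter_measurableSet (fun T => m T) {T : NESub k | T ≠ S}).symm ?_
    · exact MeasurableSpace.generateFrom_le fun t ht => by
        rw [Set.mem_singleton_iff] at ht; subst ht; exact hXmeas
    · exact iSup_le fun T => iSup_le fun _ => h_le_top k T
    · exact isPiSystem_piiUnionInter (fun T => {s | MeasurableSet[m T] s})
        (fun T s hs t ht _ => @MeasurableSet.inter _ (m T) s t hs ht) {T : NESub k | T ≠ S}
    · rw [IndepSets_iff]
      rintro t1 t2 ht1 ht2
      rw [Set.mem_singleton_iff] at ht1; subst ht1
      obtain ⟨pt, hpt, ft, hft, rfl⟩ := ht2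
      set t₁ := pt.filter (fun T : NESub k => T.1 ⊆ S.1) with ht₁
      set t₂ := pt.filter (fun T : NESub k => ¬ T.1 ⊆ S.1) with ht₂
      set B₁ := ⋂ T ∈ t₁, ft T with hB₁def
      set B₂ := ⋂ T ∈ t₂, ft T with hB₂def
      have hsplit : (⋂ T ∈ pt, ft T) = B₁ ∩ B₂ := by
        rw [hB₁def, hB₂def, ← Finset.set_biInter_inter, Finset.filter_union_filter_not_eq]
      have hB₁star : MeasurableSet[coordAlgStar k S.1] B₁ := by
        refine Finset.measurableSet_biInter _ fun T hT => ?_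
        have hT' := Finset.mem_filter.mp hT
        have hne : T ≠ S := hpt hT'.1
        have hss : T.1 ⊂ S.1 := hT'.2.ssubset_of_ne fun h => hne (Subtype.ext h)
        exact (le_iSup₂ (f := fun (T : NESub k) (_ : T.1 ⊂ S.1) => m T) T hss) _ (hft T hT'.1)
      have hB₁S : MeasurableSet[MS] B₁ := by
        refine Finset.measurableSet_biInter _ fun T hT => ?_
        have hT' := Finset.mem_filter.mp hT
        exact (le_iSup₂ (f := fun (T : NESub k) (_ : T ∈ {T : NESub k | T.1 ⊆ S.1}) => m T)
          T hT'.2) _ (hft T hT'.1)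
      have hB₂S : MeasurableSet[MS'] B₂ := by
        refine Finset.measurableSet_biInter _ fun T hT => ?_
        have hT' := Finset.mem_filter.mp hT
        exact (le_iSup₂ (f := fun (T : NESub k) (_ : T ∈ {T : NESub k | ¬ T.1 ⊆ S.1}) => m T)
          T hT'.2) _ (hft T hT'.1)
      rw [hsplit, ← Set.inter_assoc]
      rw [hIndepIff _ _ (hXS.inter hB₁S) hB₂S, hind B₁ hB₁star,
        hIndepIff _ _ hB₁S hB₂S, mul_assoc]
  intro B hB
  exact (Indep_iff _ _ _).mp key X B
    (MeasurableSpace.measurableSet_generateFrom (Set.mem_singleton X)) hB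

end Core

lemma biInter_measure (k : ℕ) (X : NESub k → Set (NESub k → ℝ))
    (hmeas : ∀ S : NESub k, MeasurableSet[coordAlg k S.1] (X S))
    (hind : ∀ S : NESub k, ∀ B : Set (NESub k → ℝ), MeasurableSet[coordAlgStar k S.1] B →
      cubeMeasure k (X S ∩ B) = cubeMeasure k (X S) * cubeMeasure k B)
    (F : Finset (NESub k)) :
    cubeMeasure k (⋂ S ∈ F, X S) = ∏ S ∈ F, cubeMeasure k (X S) := by
  classical
  induction F using Finset.strongInduction with
  | _ F ih =>
    rcases F.eq_empty_or_nonempty with rfl | hF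
    · simp
    · obtain ⟨S₀, hS₀F, hmax⟩ := Finset.exists_max_image F (fun S => S.1.card) hF
      have hrew : F = insert S₀ (F.erase S₀) := (Finset.insert_erase hS₀F).symm
      rw [hrew, Finset.set_biInter_insert, Finset.prod_insert (Finset.notMem_erase _ _)]
      have hB : MeasurableSet[⨆ T ∈ {T : NESub k | T ≠ S₀},
          MeasurableSpace.comap (fun x : NESub k → ℝ => x T) inferInstance]
          (⋂ S ∈ F.erase S₀, X S) := by
        refine Finset.measurableSet_biInter _ fun T hT => ?_
        have hTne : T ≠ S₀ := Finset.ne_of_mem_erase hT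
        have hTF : T ∈ F := Finset.mem_of_mem_erase hT
        have hle : coordAlg k T.1 ≤ ⨆ T ∈ {T : NESub k | T ≠ S₀},
            MeasurableSpace.comap (fun x : NESub k → ℝ => x T) inferInstance := by
          refine iSup_le fun U => iSup_le fun hU => ?_
          have hUne : U ≠ S₀ := by
            intro h; subst h
            exact hTne (Subtype.ext (Finset.eq_of_subset_of_card_le hU (hmax T hTF)).symm)
          exact le_iSup₂ (f := fun (U : NESub k) (_ : U ∈ {T : NESub k | T ≠ S₀}) =>
            MeasurableSpace.comap (fun x : NESub k → ℝ => x U) inferInstance) U hUne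
        exact hle _ (hmeas T)
      rw [indep_of_ne k S₀ (X S₀) (hmeas S₀) (hind S₀) _ hB,
        ih (F.erase S₀) (Finset.erase_ssubset hS₀F)]


/-- Total independence: if for every nonempty `S ⊆ [k]` the set `X_S ⊆ [0,1]^{r([k])}`
belongs to `𝓐 S` and is independent from `𝓐* S`, then the family `{X_S}` is totally
independent: for distinct `S₁, …, S_r`, `Vol(⋂ᵢ X_{Sᵢ}) = ∏ᵢ Vol(X_{Sᵢ})`. -/
theorem totally_independent_family (k : ℕ) (X : NESub k → Set (NESub k → ℝ))
    (hmeas : ∀ S : NESub k, MeasurableSet[coordAlg k S.1] (X S))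
    (hind : ∀ S : NESub k, ∀ B : Set (NESub k → ℝ), MeasurableSet[coordAlgStar k S.1] B →
      cubeMeasure k (X S ∩ B) = cubeMeasure k (X S) * cubeMeasure k B) :
    ∀ (r : ℕ) (S : Fin r → NESub k), Function.Injective S →
      cubeMeasure k (⋂ i, X (S i)) = ∏ i, cubeMeasure k (X (S i)) := by
  classical
  intro r S hinj
  have h1 : (⋂ i, X (S i)) = ⋂ T ∈ Finset.image S Finset.univ, X T := by
    ext x
    simp only [mem_iInter, Finset.mem_image, Finset.mem_univ, true_and]
    exact ⟨fun h T ⟨i, hi⟩ => hi ▸ h i, fun h i => h (S i) ⟨i, rfl⟩⟩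
  have h2 : ∏ i, cubeMeasure k (X (S i))
      = ∏ T ∈ Finset.image S Finset.univ, cubeMeasure k (X T) :=
    (Finset.prod_image (f := fun T => cubeMeasure k (X T)) fun a _ b _ h => hinj h).symm
  rw [h1, h2, biInter_measure k X hmeas hind]
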